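/- Let M be a simple matroid, k ≥ 3 an integer, and k a k-element set. The assignment sending a k-net N with parts (M_α)_{α∈k} to the function τ : M → k with τ(u) = α for u ∈ M_α is a bijection between the set of k-nets on M and the set Z'_k(M) \ B_k(M), where Z'_k(M) is the set of functions M → k whose restriction to every rank-2 flat is either constant or bijective, and B_k(M) is the set of constant functions. -/

import Mathlib

/-- A matroid is simple if every subset of its ground set of size at most two is
independent. -/
def Matroid.IsSimpleMatroid {α : Type} (M : Matroid α) : Prop :=
  ∀ S : Set α, S ⊆ M.E → S.ncard ≤ 2 → M.Indep S

/-- A line (rank-2 flat) of a matroid: a flat having a basis of size two. -/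
def Matroid.IsLine {α : Type} (M : Matroid α) (F : Set α) : Prop :=
  M.IsFlat F ∧ ∃ I, M.IsBasis I F ∧ I.ncard = 2

/-- Let `M` be a simple matroid and `K` a set with `k ≥ 3` elements.  Identifying a
`K`-labeled `k`-net on `M` (a partition into nonempty blocks such that for points
`u, v` in distinct blocks the closure of `{u, v}` meets every block in exactly one
element) with its coloring function `τ : α → K`, the set of `k`-nets on `M` is
exactly `Z'_K(M) \ B_K(M)`: the set of non-constant functions `τ` whose restriction
to every rank-2 flat of `M` is either constant or bijective onto `K`. -/
lemma Matroid.closure_flat_aux {α : Type} (M : Matroid α) (S : Set α) :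
    M.IsFlat (M.closure S) := by
  refine ⟨fun I X hI hIX => ?_, M.closure_subset_ground S⟩
  have h1 : M.closure I = M.closure S := by
    rw [hI.closure_eq_closure, M.closure_closure]
  exact hIX.subset_closure.trans h1.subset

theorem knets_eq_special_cocycles (α K : Type) [Fintype α] [Fintype K]
    (M : Matroid α) (hE : M.E = Set.univ) (hs : M.IsSimpleMatroid)
    (k : ℕ) (hk : 3 ≤ k) (hK : Fintype.card K = k) :
    {c : α → K | (∀ γ : K, ∃ u, c u = γ) ∧
        ∀ u v : α, c u ≠ c v → ∀ γ : K,
          ∃! w, w ∈ M.closure {u, v} ∧ c w = γ} =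
    {τ : α → K | (∀ X : Set α, M.IsLine X →
        ((∀ u ∈ X, ∀ v ∈ X, τ u = τ v) ∨ Set.BijOn τ X Set.univ)) ∧
      ¬ ∃ γ : K, ∀ u, τ u = γ} := by
  classical
  have hground : ∀ S : Set α, S ⊆ M.E := fun S => by rw [hE]; exact Set.subset_univ S
  have hpair : ∀ u v : α, u ≠ v → M.Indep {u, v} := fun u v huv =>
    hs _ (hground _) (le_of_eq (Set.ncard_pair huv))
  have hline : ∀ u v : α, u ≠ v → M.IsLine (M.closure {u, v}) := fun u v huv =>
    ⟨M.closure_flat_aux _, {u, v}, (hpair u v huv).isBasis_closure, Set.ncard_pair huv⟩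
  have hmem : ∀ u v : α, ({u, v} : Set α) ⊆ M.closure {u, v} := fun u v =>
    M.subset_closure _ (hground _)
  have hXeq : ∀ (X : Set α) (u v : α), M.IsLine X → u ∈ X → v ∈ X → u ≠ v →
      X = M.closure {u, v} := by
    intro X u v hX hu hv huv
    obtain ⟨hF, I, hI, hIcard⟩ := hX
    obtain ⟨J, hJ, hsub⟩ := (hpair u v huv).subset_isBasis_of_subset
      (Set.insert_subset hu (Set.singleton_subset_iff.2 hv)) (hground X)
    have hJcard : J.ncard = 2 := by
      rw [Set.ncard_def, hJ.encard_eq_encard hI, ← Set.ncard_def, hIcard]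
    have hJeq : ({u, v} : Set α) = J :=
      Set.eq_of_subset_of_ncard_le hsub
        (by rw [hJcard, Set.ncard_pair huv]) J.toFinite
    rw [← hF.closure, ← hJ.closure_eq_closure, ← hJeq]
  ext c
  simp only [Set.mem_setOf_eq]
  constructor
  · rintro ⟨hsurj, hnet⟩
    constructor
    · intro X hX
      rcases em (∀ u ∈ X, ∀ v ∈ X, c u = c v) with h | h
      · exact Or.inl h
      · right
        push_neg at h
        obtain ⟨u, hu, v, hv, huv⟩ := h
        have hne : u ≠ v := fun h => huv (by rw [h])
        have hXe := hXeq X u v hX hu hv hne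
        refine ⟨fun x _ => Set.mem_univ _, ?_, ?_⟩
        · intro x hx y hy hxy
          rw [hXe] at hx hy
          exact ((hnet u v huv (c x)).unique ⟨hx, rfl⟩ ⟨hy, hxy.symm⟩)
        · intro γ _
          obtain ⟨w, hw⟩ := (hnet u v huv γ).exists
          exact ⟨w, by rw [hXe]; exact hw.1, hw.2⟩
    · rintro ⟨γ, hγ⟩
      obtain ⟨γ', hγ'⟩ := Fintype.exists_ne_of_one_lt_card (by omega) γ
      obtain ⟨u, hu⟩ := hsurj γ'
      exact hγ' (hu ▸ hγ u)
  · rintro ⟨hlines, hnc⟩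
    have hKne : Nonempty K := Fintype.card_pos_iff.mp (by omega)
    have hαne : Nonempty α := by
      by_contra h
      rw [not_nonempty_iff] at h
      exact hnc ⟨Classical.arbitrary K, fun u => (h.false u).elim⟩
    obtain ⟨u0⟩ := hαne
    have hnc' : ¬ ∀ u, c u = c u0 := fun h => hnc ⟨c u0, h⟩
    push_neg at hnc'
    obtain ⟨v0, hv0⟩ := hnc'
    have key : ∀ u v : α, c u ≠ c v → Set.BijOn c (M.closure {u, v}) Set.univ := by
      intro u v huv
      have hne : u ≠ v := fun h => huv (by rw [h])
      rcases hlines _ (hline u v hne) with h | h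
      · exact absurd (h u (hmem u v (Set.mem_insert u {v})) v
          (hmem u v (Set.mem_insert_of_mem u rfl))) huv
      · exact h
    constructor
    · intro γ
      obtain ⟨w, _, hw⟩ := (key v0 u0 hv0).surjOn (Set.mem_univ γ)
      exact ⟨w, hw⟩
    · intro u v huv γ
      have B := key u v huv
      obtain ⟨w, hwmem, hwγ⟩ := B.surjOn (Set.mem_univ γ)
      refine ⟨w, ⟨hwmem, hwγ⟩, ?_⟩
      rintro y ⟨hy, hyγ⟩
      exact B.injOn hy hwmem (hyγ.trans hwγ.symm)
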